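/- Let N be a positive natural number, M ∈ ℝᴺˣᴺ an invertible matrix, J, G : ℝᴺ → ℝᴺˣᴺ matrix-valued maps, and H, S : ℝᴺ → ℝ differentiable. Set Ĵ(a) := M⁻¹ J(a) M⁻¹ and Ĝ(a) := M⁻¹ G(a) M⁻¹. If a* ∈ ℝᴺ satisfies J(a*) M⁻¹ ∇H(a*) + G(a*) M⁻¹ ∇S(a*) = 0, then Ĵ(a*) ∇H(a*) + Ĝ(a*) ∇S(a*) = 0, and consequently the constant function a(t) := a* is a solution of the semi-discrete system a'(t) = Ĵ(a(t)) ∇H(a(t)) + Ĝ(a(t)) ∇S(a(t)). (Equilibria of the continuous problem belonging to the approximation space are equilibria of the semi-discrete problem.) -/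

import Mathlib

open Matrix

/-- Let `M` be invertible, `Ĵ(a) := M⁻¹J(a)M⁻¹`, `Ĝ(a) := M⁻¹G(a)M⁻¹`. If
`a*` satisfies `J(a*)M⁻¹∇H(a*) + G(a*)M⁻¹∇S(a*) = 0`, then
`Ĵ(a*)∇H(a*) + Ĝ(a*)∇S(a*) = 0`, and the constant function `a(t) := a*` solves the
semi-discrete system `a' = Ĵ(a)∇H(a) + Ĝ(a)∇S(a)`: equilibria of the continuous problem
belonging to the approximation space are equilibria of the semi-discrete problem. -/
theorem stmt_11 (N : ℕ) (hN : 0 < N)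
    (M : Matrix (Fin N) (Fin N) ℝ) (hMu : IsUnit M)
    (J G : EuclideanSpace ℝ (Fin N) → Matrix (Fin N) (Fin N) ℝ)
    (H S : EuclideanSpace ℝ (Fin N) → ℝ)
    (hH : Differentiable ℝ H) (hS : Differentiable ℝ S)
    (aStar : EuclideanSpace ℝ (Fin N))
    (heq : (J aStar).mulVec (M⁻¹.mulVec (gradient H aStar : EuclideanSpace ℝ (Fin N))) +
        (G aStar).mulVec (M⁻¹.mulVec (gradient S aStar : EuclideanSpace ℝ (Fin N))) = 0) :
    (M⁻¹ * J aStar * M⁻¹).mulVec (gradient H aStar : EuclideanSpace ℝ (Fin N)) +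
        (M⁻¹ * G aStar * M⁻¹).mulVec (gradient S aStar : EuclideanSpace ℝ (Fin N)) = 0 ∧
      ∀ t : ℝ, HasDerivAt (fun _ : ℝ => aStar)
        (WithLp.toLp 2 ((M⁻¹ * J aStar * M⁻¹).mulVec (gradient H aStar : EuclideanSpace ℝ (Fin N)) +
          (M⁻¹ * G aStar * M⁻¹).mulVec (gradient S aStar : EuclideanSpace ℝ (Fin N)))) t := by
  have key : (M⁻¹ * J aStar * M⁻¹).mulVec (gradient H aStar : EuclideanSpace ℝ (Fin N)) +
      (M⁻¹ * G aStar * M⁻¹).mulVec (gradient S aStar : EuclideanSpace ℝ (Fin N)) = 0 := by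
    rw [Matrix.mul_assoc, ← Matrix.mulVec_mulVec, ← Matrix.mulVec_mulVec,
      Matrix.mul_assoc, ← Matrix.mulVec_mulVec, ← Matrix.mulVec_mulVec,
      ← Matrix.mulVec_add, heq, Matrix.mulVec_zero]
  refine ⟨key, fun t => ?_⟩
  rw [key, WithLp.toLp_zero]
  exact hasDerivAt_const t aStar
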